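/- Let C be a well-powered category with wide pullbacks and let F : C ⥤ C preserve monomorphisms. Then F preserves intersections (the induced maps on subobject lattices preserve arbitrary infima) if and only if for every morphism f : X ⟶ F.obj Y the next-time operator ○_f : Subobject Y → Subobject X has a left adjoint, i.e., there exists a map l : Subobject X → Subobject Y forming a Galois connection with ○_f (l m ≤ n ↔ m ≤ ○_f n). -/

import Mathlib

open CategoryTheory CategoryTheory.Limits

universe w v u

variable {C : Type u} [Category.{v} C]

/-- A functor preserves monomorphisms. -/
def PreservesMonos (F : C ⥤ C) : Prop :=
  ∀ ⦃X Y : C⦄ (f : X ⟶ Y), Mono f → Mono (F.map f)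

/-- The induced map on subobject lattices of a mono-preserving functor. -/
noncomputable def subMap {F : C ⥤ C} (hF : PreservesMonos F) {Y : C} (m : Subobject Y) :
    Subobject (F.obj Y) :=
  letI : Mono (F.map m.arrow) := hF m.arrow inferInstance
  Subobject.mk (F.map m.arrow)

/-- A mono-preserving functor preserves intersections if the induced maps on subobject
lattices preserve arbitrary infima. -/
def PreservesIntersections [WellPowered.{v} C] [HasWidePullbacks.{v} C] {F : C ⥤ C}
    (hF : PreservesMonos F) : Prop :=
  ∀ ⦃Y : C⦄ (s : Set (Subobject Y)), subMap hF (sInf s) = sInf (subMap hF '' s)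

/-- The "next time" operator of a morphism `f : X ⟶ F.obj Y`. -/
noncomputable def nextTime [HasPullbacks C] {F : C ⥤ C} (hF : PreservesMonos F)
    {X Y : C} (f : X ⟶ F.obj Y) (n : Subobject Y) : Subobject X :=
  (Subobject.pullback f).obj (subMap hF n)

/-- The "previous time" operator of a morphism `f : X ⟶ F.obj Y`: it sends a subobject `m` of
`X` to the least subobject `n` of `Y` such that `m.arrow ≫ f` factors through `F.map n.arrow`. -/
noncomputable def prevTime [WellPowered.{v} C] [HasWidePullbacks.{v} C] (F : C ⥤ C)
    {X Y : C} (f : X ⟶ F.obj Y) (m : Subobject X) : Subobject Y :=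
  sInf {n : Subobject Y | ∃ g : (m : C) ⟶ F.obj (n : C), g ≫ F.map n.arrow = m.arrow ≫ f}

/-- An `I`-pointed coalgebra `(X, c, i)` is reachable if every monomorphic homomorphism of
`I`-pointed coalgebras into it is an isomorphism. -/
def Reachable (F : C ⥤ C) {I X : C} (c : X ⟶ F.obj X) (i : I ⟶ X) : Prop :=
  ∀ ⦃S : C⦄ (s : S ⟶ F.obj S) (iS : I ⟶ S) (m : S ⟶ X),
    Mono m → s ≫ F.map m = m ≫ c → iS ≫ m = i → IsIso m

section Aux

variable [WellPowered.{v} C] [HasWidePullbacks.{v} C]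

/-- A subobject `m` is below `P` iff `P` factors `m.arrow`. -/
theorem le_iff_factors' {B : C} (m P : Subobject B) : m ≤ P ↔ P.Factors m.arrow :=
  ⟨fun h => Subobject.factors_of_le _ h (Subobject.factors_self m),
   fun h => Subobject.le_of_comm (P.factorThru m.arrow h) (Subobject.factorThru_arrow _ _ _)⟩

/-- Factorization through a pullback subobject. -/
theorem pullback_factors_iff' {X Y A : C} (f : X ⟶ Y) (n : Subobject Y) (k : A ⟶ X) :
    ((Subobject.pullback f).obj n).Factors k ↔ n.Factors (k ≫ f) := by
  revert n
  apply Quotient.ind'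
  intro n
  constructor
  · rintro ⟨g, rfl⟩
    exact ⟨g ≫ pullback.fst _ _, by
      erw [MonoOver.pullback_obj_arrow, Category.assoc, Category.assoc, pullback.condition]; rfl⟩
  · rintro ⟨g, hg⟩
    exact ⟨pullback.lift g k hg, pullback.lift_snd _ _ _⟩

theorem factors_sInf' {B A : C} (s : Set (Subobject B)) (g : A ⟶ B)
    (k : ∀ t ∈ s, t.Factors g) : (sInf s).Factors g := by
  have mem : ∀ j : equivShrink.{v} (Subobject B) '' s,
      ((equivShrink.{v} (Subobject B)).symm j : Subobject B) ∈ s := by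
    rintro ⟨-, t, ht, rfl⟩; simpa using ht
  show (Subobject.sInf.{v} s).Factors g
  rw [Subobject.sInf, Subobject.mk_factors_iff]
  let c : Limits.Cone (Subobject.wideCospan.{v} s) :=
    WidePullbackShape.mkCone (F := Subobject.wideCospan.{v} s) g
      (fun j => Subobject.factorThru _ g (k _ (mem j)))
      (fun j => Subobject.factorThru_arrow _ _ _)
  exact ⟨Limits.limit.lift (Subobject.wideCospan.{v} s) c,
    Limits.limit.lift_π c (none : WidePullbackShape (equivShrink.{v} (Subobject B) '' s))⟩

theorem subMap_mono {F : C ⥤ C} (hF : PreservesMonos F) {Y : C} {m n : Subobject Y}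
    (h : m ≤ n) : subMap hF m ≤ subMap hF n := by
  haveI := hF m.arrow inferInstance
  haveI := hF n.arrow inferInstance
  refine Subobject.mk_le_mk_of_comm (F.map (Subobject.ofLE m n h)) ?_
  rw [← F.map_comp, Subobject.ofLE_arrow]

theorem subMap_factors_iff {F : C ⥤ C} (hF : PreservesMonos F) {Y A : C} (n : Subobject Y)
    (k : A ⟶ F.obj Y) :
    (subMap hF n).Factors k ↔ ∃ g : A ⟶ F.obj (n : C), g ≫ F.map n.arrow = k := by
  haveI := hF n.arrow inferInstance
  exact Subobject.mk_factors_iff _ _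

theorem le_nextTime_iff {F : C ⥤ C} (hF : PreservesMonos F) {X Y : C} (f : X ⟶ F.obj Y)
    (m : Subobject X) (n : Subobject Y) :
    m ≤ nextTime hF f n ↔ (subMap hF n).Factors (m.arrow ≫ f) :=
  (le_iff_factors' _ _).trans (pullback_factors_iff' _ _ _)

theorem nextTime_mono {F : C ⥤ C} (hF : PreservesMonos F) {X Y : C} (f : X ⟶ F.obj Y)
    {m n : Subobject Y} (h : m ≤ n) : nextTime hF f m ≤ nextTime hF f n :=
  leOfHom ((Subobject.pullback f).map (homOfLE (subMap_mono hF h)))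

end Aux

/-- A mono-preserving functor preserves intersections iff for every `f : X ⟶ F.obj Y` the
"next time" operator `○_f : Subobject Y → Subobject X` has a left adjoint, i.e.\ there is a
map `l : Subobject X → Subobject Y` forming a Galois connection with `○_f`. -/


theorem preservesIntersections_iff_nextTime_hasLeftAdjoint
    [WellPowered.{v} C] [HasWidePullbacks.{v} C]
    (F : C ⥤ C) (hF : PreservesMonos F) :
    PreservesIntersections hF ↔
      ∀ ⦃X Y : C⦄ (f : X ⟶ F.obj Y),
        ∃ l : Subobject X → Subobject Y, GaloisConnection l (nextTime hF f) := by
  constructor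
  · intro hPI X Y f
    refine ⟨fun m => sInf {n | m ≤ nextTime hF f n}, fun m n => ?_⟩
    constructor
    · intro h
      have key : m ≤ nextTime hF f (sInf {n | m ≤ nextTime hF f n}) := by
        rw [le_nextTime_iff, hPI]
        refine factors_sInf' _ _ ?_
        rintro t ⟨n', hn', rfl⟩
        exact (le_nextTime_iff hF f m n').mp hn'
      exact key.trans (nextTime_mono hF f h)
    · intro h
      exact Subobject.sInf_le.{v} _ _ h
  · intro hA Y s
    apply le_antisymm
    · apply Subobject.le_sInf.{v}
      rintro t ⟨n, hn, rfl⟩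
      exact subMap_mono hF (Subobject.sInf_le.{v} _ _ hn)
    · set m₀ := sInf (subMap hF '' s) with hm₀
      obtain ⟨l, hl⟩ := hA m₀.arrow
      have h1 : ∀ n ∈ s, (⊤ : Subobject (m₀ : C)) ≤ nextTime hF m₀.arrow n := by
        intro n hn
        rw [le_nextTime_iff]
        refine Subobject.factors_of_factors_right _ ?_
        exact (le_iff_factors' m₀ (subMap hF n)).mp (Subobject.sInf_le.{v} _ _ ⟨n, hn, rfl⟩)
      have h2 : l ⊤ ≤ sInf s := Subobject.le_sInf.{v} _ _ fun n hn => (hl ⊤ n).mpr (h1 n hn)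
      have h3 : (⊤ : Subobject (m₀ : C)) ≤ nextTime hF m₀.arrow (sInf s) :=
        (hl ⊤ (sInf s)).mp h2
      rw [le_nextTime_iff] at h3
      exact Subobject.le_of_comm
        (inv (⊤ : Subobject (m₀ : C)).arrow ≫ (subMap hF (sInf s)).factorThru _ h3)
        (by rw [Category.assoc, Subobject.factorThru_arrow, IsIso.inv_hom_id_assoc])
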